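/- Let S be a completely 0-simple semigroup, presented as a regular Rees matrix semigroup M⁰(G; n, m; P) over a group G with n×m sandwich matrix P over G⁰. If Y is a subsemilattice of S, then |Y| ≤ √(|S| − 1) + 1, where |S| = |G|·n·m + 1. -/

import Mathlib

/-- A subsemilattice of a semigroup: a subsemigroup consisting of pairwise commuting
idempotents. -/
def IsSubsemilattice {S : Type} [Mul S] (Y : Set S) : Prop :=
  (∀ a ∈ Y, ∀ b ∈ Y, a * b ∈ Y) ∧ (∀ a ∈ Y, a * a = a) ∧
    (∀ a ∈ Y, ∀ b ∈ Y, a * b = b * a)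


/-- Carrier of the Rees matrix semigroup `M⁰(G; n, m; P)`: triples `(g; i, j)` together
with a zero (represented by `none`). -/
def ReesCarrier (G : Type) (n m : ℕ) : Type := Option (G × Fin n × Fin m)

/-- Multiplication of the Rees matrix semigroup `M⁰(G; n, m; P)` with sandwich matrix
`P : Fin m → Fin n → Option G` (entries in `G⁰`, with `none` playing the role of `0`):
`(g; i, j)(h; k, l) = (g P_{j,k} h; i, l)` if `P_{j,k} ≠ 0`, and `0` otherwise. -/
def reesMul {G : Type} [Group G] {n m : ℕ} (P : Fin m → Fin n → Option G) :
    ReesCarrier G n m → ReesCarrier G n m → ReesCarrier G n m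
  | some (g, i, j), some (h, k, l) =>
      match P j k with
      | some p => some (g * p * h, i, l)
      | none => none
  | _, _ => none

theorem reesMul_none_left {G : Type} [Group G] {n m : ℕ} (P : Fin m → Fin n → Option G)
    (x : ReesCarrier G n m) : reesMul P none x = none := by cases x <;> rfl

theorem reesMul_none_right {G : Type} [Group G] {n m : ℕ} (P : Fin m → Fin n → Option G)
    (x : ReesCarrier G n m) : reesMul P x none = none := by cases x <;> rfl

theorem reesMul_assoc {G : Type} [Group G] {n m : ℕ} (P : Fin m → Fin n → Option G)
    (x y z : ReesCarrier G n m) :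
    reesMul P (reesMul P x y) z = reesMul P x (reesMul P y z) := by
  have key : ∀ (g h : G) (i : Fin n) (j : Fin m) (k : Fin n) (l : Fin m),
      reesMul P (some (g, i, j)) (some (h, k, l)) = (P j k).map (fun p => (g * p * h, i, l)) := by
    intro g h i j k l
    show (match P j k with | some p => some (g * p * h, i, l) | none => none) = _
    cases P j k <;> rfl
  match x, y, z with
  | none, _, _ => rfl
  | some _, none, _ => rfl
  | some (g, i, j), some (h, k, l), none =>
    show reesMul P (reesMul P (some (g, i, j)) (some (h, k, l))) none = none
    exact reesMul_none_right P _
  | some (g, i, j), some (h, k, l), some (f, u, v) =>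
    rw [key, key]
    cases hp : P j k <;> cases hq : P l u <;>
      simp [hp, hq, key, mul_assoc] <;>
      first
        | rfl
        | exact reesMul_none_left P _
        | exact (reesMul_none_right P _).symm
        | exact (reesMul_none_left P _).trans (reesMul_none_right P _).symm

/-- The Rees matrix semigroup `M⁰(G; n, m; P)`. -/
def reesSemigroup {G : Type} [Group G] {n m : ℕ} (P : Fin m → Fin n → Option G) :
    Semigroup (ReesCarrier G n m) where
  mul := reesMul P
  mul_assoc := reesMul_assoc P

/-- Let `S = M⁰(G; n, m; P)` be a regular Rees matrix semigroup over a group `G`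
(regular: every row and every column of `P` has a nonzero entry). If `Y` is a
subsemilattice of `S` then `|Y| ≤ √(|S| - 1) + 1`, where `|S| = |G|·n·m + 1`. -/
theorem stmt_15 {G : Type} [Group G] [Fintype G] {n m : ℕ}
    (P : Fin m → Fin n → Option G)
    (hrow : ∀ j : Fin m, ∃ k : Fin n, P j k ≠ none)
    (hcol : ∀ k : Fin n, ∃ j : Fin m, P j k ≠ none)
    (Y : Set (ReesCarrier G n m))
    (hY : @IsSubsemilattice (ReesCarrier G n m) (reesSemigroup P).toMul Y) :
    (Y.ncard : ℝ) ≤ Real.sqrt (Fintype.card G * n * m) + 1 := by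
  classical
  have hfinT : Finite (ReesCarrier G n m) := by
    show Finite (Option (G × Fin n × Fin m)); infer_instance
  obtain ⟨hclosed, hidem, hcomm⟩ := hY
  have hmul : ∀ a b : ReesCarrier G n m,
      @HMul.hMul _ _ _ (@instHMul _ (reesSemigroup P).toMul) a b = reesMul P a b :=
    fun _ _ => rfl
  -- diagonal entries for idempotents
  have hPdiag : ∀ g : G, ∀ i : Fin n, ∀ j : Fin m, some (g, i, j) ∈ Y →
      P j i = some g⁻¹ := by
    intro g i j hmem
    have h := hidem _ hmem
    change (match P j i with | some p => some (g * p * g, i, j) | none => none) = some (g, i, j) at h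
    cases hp : P j i with
    | none => simp [hp] at h
    | some p =>
        simp only [hp] at h
        have hgg : g * p * g = g := congrArg Prod.fst (Option.some.inj h)
        have hgp : g * p = 1 := mul_right_cancel (b := g) (by rw [hgg, one_mul])
        have hpg : p = g⁻¹ := eq_inv_of_mul_eq_one_right hgp
        rw [hpg]
  -- key separation lemma
  have key : ∀ g : G, ∀ i : Fin n, ∀ j : Fin m, ∀ h : G, ∀ k : Fin n, ∀ l : Fin m,
      some (g, i, j) ∈ Y → some (h, k, l) ∈ Y →
      (some (g, i, j) : ReesCarrier G n m) ≠ some (h, k, l) → i ≠ k ∧ j ≠ l := by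
    intro g i j h k l he hf hne
    have hp := hPdiag g i j he
    have hq := hPdiag h k l hf
    have hc := hcomm _ he _ hf
    change (match P j k with | some p => some (g * p * h, i, l) | none => none) =
      (match P l i with | some p => some (h * p * g, k, j) | none => none) at hc
    have hzero : P j k = none ∧ P l i = none := by
      cases hjk : P j k with
      | none =>
        cases hli : P l i with
        | none => exact ⟨rfl, rfl⟩
        | some s => simp [hjk, hli] at hc
      | some r =>
        cases hli : P l i with
        | none => simp [hjk, hli] at hc
        | some s =>
          exfalso
          simp only [hjk, hli] at hc
          have heq := Option.some.inj hc
          have hik : i = k := congrArg (fun x => x.2.1) heq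
          have hlj : l = j := congrArg (fun x => x.2.2) heq
          subst hik; subst hlj
          rw [hp] at hq
          have hgh : g = h := by
            have := Option.some.inj hq
            rwa [inv_inj] at this
          exact hne (by rw [hgh])
    constructor
    · intro hik; subst hik
      rw [hzero.1] at hp; exact Option.some_ne_none _ hp.symm
    · intro hjl; subst hjl
      rw [hzero.2] at hp; exact Option.some_ne_none _ hp.symm
  -- the nonzero part of Y
  set Y' : Set (ReesCarrier G n m) := Y \ {none} with hY'
  have hY'fin : Y'.Finite := Set.toFinite _
  -- injective into rows, and into columns
  have hrows : Y'.ncard ≤ n := by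
    have hinj : Set.InjOn (fun x : ReesCarrier G n m => Option.map (fun t => t.2.1) x) Y' := by
      rintro (_ | ⟨g, i, j⟩) ha (_ | ⟨h, k, l⟩) hb hab
      · rfl
      · exact absurd (Set.mem_singleton _) ha.2
      · exact absurd (Set.mem_singleton _) hb.2
      · simp only [Option.map_some] at hab
        by_contra hne
        have := (key g i j h k l ha.1 hb.1 hne).1
        exact this (Option.some.inj hab)
    calc Y'.ncard = ((fun x : ReesCarrier G n m => Option.map (fun t => t.2.1) x) '' Y').ncard :=
          (Set.ncard_image_of_injOn hinj).symm
      _ ≤ (Set.range (some : Fin n → Option (Fin n))).ncard := by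
          apply Set.ncard_le_ncard _ (Set.toFinite _)
          rintro x ⟨y, hy, rfl⟩
          rcases y with _ | ⟨g, i, j⟩
          · exact absurd rfl hy.2
          · exact ⟨i, rfl⟩
      _ = n := by
          rw [← Set.image_univ, Set.ncard_image_of_injective _ (Option.some_injective _),
            Set.ncard_univ, Nat.card_eq_fintype_card, Fintype.card_fin]
  have hcols : Y'.ncard ≤ m := by
    have hinj : Set.InjOn (fun x : ReesCarrier G n m => Option.map (fun t => t.2.2) x) Y' := by
      rintro (_ | ⟨g, i, j⟩) ha (_ | ⟨h, k, l⟩) hb hab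
      · rfl
      · exact absurd (Set.mem_singleton _) ha.2
      · exact absurd (Set.mem_singleton _) hb.2
      · simp only [Option.map_some] at hab
        by_contra hne
        have := (key g i j h k l ha.1 hb.1 hne).2
        exact this (Option.some.inj hab)
    calc Y'.ncard = ((fun x : ReesCarrier G n m => Option.map (fun t => t.2.2) x) '' Y').ncard :=
          (Set.ncard_image_of_injOn hinj).symm
      _ ≤ (Set.range (some : Fin m → Option (Fin m))).ncard := by
          apply Set.ncard_le_ncard _ (Set.toFinite _)
          rintro x ⟨y, hy, rfl⟩
          rcases y with _ | ⟨g, i, j⟩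
          · exact absurd rfl hy.2
          · exact ⟨j, rfl⟩
      _ = m := by
          rw [← Set.image_univ, Set.ncard_image_of_injective _ (Option.some_injective _),
            Set.ncard_univ, Nat.card_eq_fintype_card, Fintype.card_fin]
  -- |Y| ≤ |Y'| + 1
  have hYcard : Y.ncard ≤ Y'.ncard + 1 := by
    have hsub : Y ⊆ insert none Y' := by
      intro x hx
      by_cases hx0 : x = none
      · exact hx0 ▸ Set.mem_insert _ _
      · exact Set.mem_insert_of_mem _ ⟨hx, hx0⟩
    calc Y.ncard ≤ (insert (none : ReesCarrier G n m) Y').ncard :=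
          Set.ncard_le_ncard hsub (Set.toFinite _)
      _ ≤ Y'.ncard + 1 := Set.ncard_insert_le _ _
  -- square bound
  have hsq : (Y'.ncard : ℝ) ≤ Real.sqrt (Fintype.card G * n * m) := by
    rw [Real.le_sqrt (by positivity)]
    have h2 : n * m ≤ Fintype.card G * n * m := by
      have : 1 ≤ Fintype.card G := Fintype.card_pos
      calc n * m = 1 * (n * m) := (one_mul _).symm
        _ ≤ Fintype.card G * (n * m) := Nat.mul_le_mul_right _ this
        _ = Fintype.card G * n * m := (mul_assoc _ _ _).symm
    have h1 : Y'.ncard * Y'.ncard ≤ Fintype.card G * n * m :=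
      le_trans (Nat.mul_le_mul hrows hcols) h2
    calc ((Y'.ncard : ℝ)) ^ 2 = ((Y'.ncard * Y'.ncard : ℕ) : ℝ) := by push_cast; ring
      _ ≤ ((Fintype.card G * n * m : ℕ) : ℝ) := by exact_mod_cast h1
      _ = (Fintype.card G : ℝ) * n * m := by push_cast; ring
    positivity
  calc (Y.ncard : ℝ) ≤ Y'.ncard + 1 := by exact_mod_cast hYcard
    _ ≤ Real.sqrt (Fintype.card G * n * m) + 1 := by linarith
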